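/- Assume a, b, d ∈ C¹([0,R]) and c ∈ C¹(Ω̄₂), and let w : ℝ² → ℝ be twice continuously differentiable on a neighbourhood of Ω̄₂. For x ∈ Ω₂ \ {0} let (A w)(x) = Σ_{j,k=1}^{2} ∂_{x_j}(a_{j,k}(·) ∂_{x_k} w)(x) denote the divergence-form operator with coefficients a_{j,k}. Then for every r ∈ (0,R) the circular mean Φ[w] is twice differentiable at r and Φ[A w](r) = h(r)(Φ[w])''(r) + h'(r)(Φ[w])'(r) + (h(r)/r)(Φ[w])'(r), where h(r) = a(r) − d(r); that is, Φ ∘ A = Ã₁ ∘ Φ with Ã₁ = D_r(h(r) D_r) + (h(r)/r) D_r. -/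

import Mathlib

open Real MeasureTheory

/-- The circular mean operator `Φ[v](r) = ∫₀^{2π} v(r(cos φ, sin φ)) dφ`. -/
noncomputable def Phi2 (v : EuclideanSpace ℝ (Fin 2) → ℝ) (r : ℝ) : ℝ :=
  ∫ φ in (0:ℝ)..(2 * Real.pi),
    v (r • (EuclideanSpace.equiv (Fin 2) ℝ).symm ![Real.cos φ, Real.sin φ])

/-- The 2×2 matrix coefficients `a_{j,k}(x)` from the paper, for `x ≠ 0`.
For the diagonal entries we use that e.g. `x₂² = |x|² - x₁²`. -/
noncomputable def aCoef2 (a b d : ℝ → ℝ) (c : EuclideanSpace ℝ (Fin 2) → ℝ)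
    (x : EuclideanSpace ℝ (Fin 2)) (j k : Fin 2) : ℝ :=
  if j = k then
    a ‖x‖ + (‖x‖ ^ 2 - x j ^ 2) * (c x + b ‖x‖) / ‖x‖ ^ 2 - x j ^ 2 * d ‖x‖ / ‖x‖ ^ 2
  else
    -(x j * x k * (b ‖x‖ + c x + d ‖x‖)) / ‖x‖ ^ 2

/-- The partial derivative `∂_{x_i} f` in two dimensions. -/
noncomputable def pd2 (i : Fin 2) (f : EuclideanSpace ℝ (Fin 2) → ℝ) :
    EuclideanSpace ℝ (Fin 2) → ℝ :=
  fun x => fderiv ℝ f x (EuclideanSpace.single i 1)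

/-- The divergence-form operator `A w = Σ_{j,k} ∂_{x_j}(a_{j,k} ∂_{x_k} w)`
in two dimensions. -/
noncomputable def Aop2 (a b d : ℝ → ℝ) (c : EuclideanSpace ℝ (Fin 2) → ℝ)
    (w : EuclideanSpace ℝ (Fin 2) → ℝ) : EuclideanSpace ℝ (Fin 2) → ℝ :=
  fun x => ∑ j, ∑ k, pd2 j (fun y => aCoef2 a b d c y j k * pd2 k w y) x

/-- in two dimensions, `Φ ∘ A = Ã₁ ∘ Φ` where
`Ã₁ = D_r(h D_r) + (h/r) D_r` and `h = a - d`: for every `r ∈ (0,R)`,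
`Φ[Aw](r) = h(r)(Φw)''(r) + h'(r)(Φw)'(r) + (h(r)/r)(Φw)'(r)`. -/

noncomputable def sph2 (φ : ℝ) : EuclideanSpace ℝ (Fin 2) :=
  (EuclideanSpace.equiv (Fin 2) ℝ).symm ![Real.cos φ, Real.sin φ]

lemma sph2_apply (φ : ℝ) (i : Fin 2) : sph2 φ i = ![Real.cos φ, Real.sin φ] i := rfl

lemma sph2_norm (φ : ℝ) : ‖sph2 φ‖ = 1 := by
  rw [EuclideanSpace.norm_eq]
  simp [sph2_apply, Fin.sum_univ_two, Real.cos_sq_add_sin_sq]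

lemma smul_sph2_norm (t φ : ℝ) (ht : 0 ≤ t) : ‖t • sph2 φ‖ = t := by
  rw [norm_smul, sph2_norm, Real.norm_eq_abs, abs_of_nonneg ht, mul_one]

noncomputable def sph2' (φ : ℝ) : EuclideanSpace ℝ (Fin 2) :=
  (EuclideanSpace.equiv (Fin 2) ℝ).symm ![-Real.sin φ, Real.cos φ]

lemma sph2'_apply (φ : ℝ) (i : Fin 2) : sph2' φ i = ![-Real.sin φ, Real.cos φ] i := rfl

lemma sph2_decomp (φ : ℝ) :
    sph2 φ = Real.cos φ • EuclideanSpace.single (0:Fin 2) (1:ℝ)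
      + Real.sin φ • EuclideanSpace.single (1:Fin 2) (1:ℝ) := by
  ext i
  fin_cases i <;> simp [sph2_apply, EuclideanSpace.single_apply]

lemma sph2'_decomp (φ : ℝ) :
    sph2' φ = (-Real.sin φ) • EuclideanSpace.single (0:Fin 2) (1:ℝ)
      + Real.cos φ • EuclideanSpace.single (1:Fin 2) (1:ℝ) := by
  ext i
  fin_cases i <;> simp [sph2'_apply, EuclideanSpace.single_apply]

lemma hasDerivAt_sph2 (φ : ℝ) : HasDerivAt sph2 (sph2' φ) φ := by
  have h : HasDerivAt (fun ψ => (![Real.cos ψ, Real.sin ψ] : Fin 2 → ℝ))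
      ![-Real.sin φ, Real.cos φ] φ := by
    rw [hasDerivAt_pi]
    intro i
    fin_cases i
    · simpa using Real.hasDerivAt_cos φ
    · simpa using Real.hasDerivAt_sin φ
  exact (((EuclideanSpace.equiv (Fin 2) ℝ).symm :
    (Fin 2 → ℝ) →L[ℝ] EuclideanSpace ℝ (Fin 2)).hasFDerivAt.comp_hasDerivAt φ h)

lemma hasDerivAt_smul_sph2 (t φ : ℝ) :
    HasDerivAt (fun ψ => t • sph2 ψ) (t • sph2' φ) φ :=
  (hasDerivAt_sph2 φ).const_smul t

lemma hasDerivAt_smul_sph2_left (t φ : ℝ) :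
    HasDerivAt (fun s : ℝ => s • sph2 φ) (sph2 φ) t := by
  simpa using (hasDerivAt_id t).smul_const (sph2 φ)

lemma hasDerivAt_sph2' (φ : ℝ) : HasDerivAt sph2' (-sph2 φ) φ := by
  have h : HasDerivAt (fun ψ => (![-Real.sin ψ, Real.cos ψ] : Fin 2 → ℝ))
      ![-Real.cos φ, -Real.sin φ] φ := by
    rw [hasDerivAt_pi]
    intro i
    fin_cases i
    · simp; exact (Real.hasDerivAt_sin φ).neg
    · simpa using Real.hasDerivAt_cos φ
  have := (((EuclideanSpace.equiv (Fin 2) ℝ).symm :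
    (Fin 2 → ℝ) →L[ℝ] EuclideanSpace ℝ (Fin 2)).hasFDerivAt.comp_hasDerivAt φ h)
  refine this.congr_deriv ?_
  ext i
  fin_cases i <;> simp [sph2_apply]

section Diff
variable {R : ℝ} {a b d : ℝ → ℝ} {c : EuclideanSpace ℝ (Fin 2) → ℝ}
  {w : EuclideanSpace ℝ (Fin 2) → ℝ} {U : Set (EuclideanSpace ℝ (Fin 2))}

lemma contDiffOn_pd2 (hU : IsOpen U) (hw : ContDiffOn ℝ 2 w U) (k : Fin 2) :
    ContDiffOn ℝ 1 (pd2 k w) U := by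
  have h1 : ContDiffOn ℝ 1 (fderiv ℝ w) U := hw.fderiv_of_isOpen hU (by norm_num)
  exact (ContinuousLinearMap.apply ℝ ℝ
    (EuclideanSpace.single k (1:ℝ))).contDiff.comp_contDiffOn h1

lemma contDiffOn_aCoef2 (hR : 0 < R)
    (ha : ContDiffOn ℝ 1 a (Set.Icc 0 R)) (hb : ContDiffOn ℝ 1 b (Set.Icc 0 R))
    (hd : ContDiffOn ℝ 1 d (Set.Icc 0 R))
    (hc : ContDiffOn ℝ 1 c (Metric.closedBall 0 R)) (j k : Fin 2) :
    ContDiffOn ℝ 1 (fun y => aCoef2 a b d c y j k) (Metric.ball 0 R \ {0}) := by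
  intro x hx
  obtain ⟨hxR, hx0⟩ := hx
  have hx0' : x ≠ 0 := hx0
  have hnx : (0:ℝ) < ‖x‖ := norm_pos_iff.2 hx0'
  have hxR' : ‖x‖ < R := by simpa [mem_ball_zero_iff] using hxR
  have hn : ContDiffAt ℝ 1 (fun y : EuclideanSpace ℝ (Fin 2) => ‖y‖) x :=
    contDiffAt_norm ℝ hx0'
  have hA : ContDiffAt ℝ 1 (fun y : EuclideanSpace ℝ (Fin 2) => a ‖y‖) x :=
    (ha.contDiffAt (Icc_mem_nhds hnx hxR')).comp x hn
  have hB : ContDiffAt ℝ 1 (fun y : EuclideanSpace ℝ (Fin 2) => b ‖y‖) x :=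
    (hb.contDiffAt (Icc_mem_nhds hnx hxR')).comp x hn
  have hD : ContDiffAt ℝ 1 (fun y : EuclideanSpace ℝ (Fin 2) => d ‖y‖) x :=
    (hd.contDiffAt (Icc_mem_nhds hnx hxR')).comp x hn
  have hC : ContDiffAt ℝ 1 c x := by
    refine hc.contDiffAt ?_
    refine Metric.closedBall_mem_nhds_of_mem ?_
    simpa [mem_ball_zero_iff] using hxR'
  have hproj : ∀ i : Fin 2, ContDiffAt ℝ 1 (fun y : EuclideanSpace ℝ (Fin 2) => y i) x :=
    fun i => (EuclideanSpace.proj i : EuclideanSpace ℝ (Fin 2) →L[ℝ] ℝ).contDiff.contDiffAt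
  have hnsq : ContDiffAt ℝ 1 (fun y : EuclideanSpace ℝ (Fin 2) => ‖y‖ ^ 2) x := hn.pow 2
  have hne : ‖x‖ ^ 2 ≠ 0 := pow_ne_zero 2 (ne_of_gt hnx)
  have : ContDiffAt ℝ 1 (fun y => aCoef2 a b d c y j k) x := by
    unfold aCoef2
    rcases eq_or_ne j k with h | h
    · simp only [if_pos h]
      exact (hA.add ((((hnsq.sub ((hproj j).pow 2)).mul (hC.add hB)).div hnsq hne))).sub
        ((((hproj j).pow 2).mul hD).div hnsq hne)
    · simp only [if_neg h]
      exact ((((hproj j).mul (hproj k)).mul ((hB.add hC).add hD)).neg).div hnsq hne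
  exact this.contDiffWithinAt

lemma contDiffOn_F (hR : 0 < R) (hU : IsOpen U) (hw : ContDiffOn ℝ 2 w U)
    (ha : ContDiffOn ℝ 1 a (Set.Icc 0 R)) (hb : ContDiffOn ℝ 1 b (Set.Icc 0 R))
    (hd : ContDiffOn ℝ 1 d (Set.Icc 0 R))
    (hc : ContDiffOn ℝ 1 c (Metric.closedBall 0 R)) (j : Fin 2) :
    ContDiffOn ℝ 1 (fun y => ∑ k, aCoef2 a b d c y j k * pd2 k w y)
      ((Metric.ball 0 R \ {0}) ∩ U) := by
  apply ContDiffOn.sum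
  intro k _
  exact ((contDiffOn_aCoef2 hR ha hb hd hc j k).mono Set.inter_subset_left).mul
    ((contDiffOn_pd2 hU hw k).mono Set.inter_subset_right)

end Diff

lemma norm_sq_eq2 (y : EuclideanSpace ℝ (Fin 2)) : ‖y‖ ^ 2 = y 0 ^ 2 + y 1 ^ 2 := by
  rw [EuclideanSpace.norm_eq, Real.sq_sqrt (by positivity)]
  simp [Fin.sum_univ_two]

lemma aCoef2_radial {a b d : ℝ → ℝ} {c : EuclideanSpace ℝ (Fin 2) → ℝ}
    (y : EuclideanSpace ℝ (Fin 2)) (hy : y ≠ 0) (g : Fin 2 → ℝ) :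
    ∑ j, (∑ k, aCoef2 a b d c y j k * g k) * y j
      = (a ‖y‖ - d ‖y‖) * ∑ k, g k * y k := by
  have hn : ‖y‖ ^ 2 ≠ 0 := pow_ne_zero 2 (norm_ne_zero_iff.2 hy)
  have h2 : ‖y‖ ^ 2 = y 0 ^ 2 + y 1 ^ 2 := norm_sq_eq2 y
  simp only [Fin.sum_univ_two, aCoef2]
  norm_num
  rw [h2] at hn ⊢
  field_simp
  ring

lemma continuous_sph2 : Continuous sph2 := by
  apply Continuous.comp (ContinuousLinearEquiv.continuous _)
  exact continuous_pi fun i => by fin_cases i <;> simp <;> fun_prop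

lemma continuous_sph2' : Continuous sph2' := by
  apply Continuous.comp (ContinuousLinearEquiv.continuous _)
  exact continuous_pi fun i => by fin_cases i <;> simp <;> fun_prop

lemma hasDerivAt_comp_smul_left {f : EuclideanSpace ℝ (Fin 2) → ℝ} {t φ : ℝ}
    (hf : DifferentiableAt ℝ f (t • sph2 φ)) :
    HasDerivAt (fun s : ℝ => f (s • sph2 φ)) (fderiv ℝ f (t • sph2 φ) (sph2 φ)) t :=
  hf.hasFDerivAt.comp_hasDerivAt t (hasDerivAt_smul_sph2_left t φ)

lemma hasDerivAt_comp_smul_right {f : EuclideanSpace ℝ (Fin 2) → ℝ} {t φ : ℝ}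
    (hf : DifferentiableAt ℝ f (t • sph2 φ)) :
    HasDerivAt (fun ψ : ℝ => f (t • sph2 ψ)) (fderiv ℝ f (t • sph2 φ) (t • sph2' φ)) φ :=
  hf.hasFDerivAt.comp_hasDerivAt φ (hasDerivAt_smul_sph2 t φ)

lemma clm_sph2 (L : EuclideanSpace ℝ (Fin 2) →L[ℝ] ℝ) (φ : ℝ) :
    L (sph2 φ) = ∑ k, L (EuclideanSpace.single k (1:ℝ)) * sph2 φ k := by
  rw [sph2_decomp]
  simp [Fin.sum_univ_two, sph2_apply, mul_comm]

lemma frame2 (L : Fin 2 → EuclideanSpace ℝ (Fin 2) →L[ℝ] ℝ) (φ : ℝ) :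
    ∑ j, L j (EuclideanSpace.single j (1:ℝ))
      = ∑ j, (L j (sph2 φ) * sph2 φ j + L j (sph2' φ) * sph2' φ j) := by
  have h := Real.sin_sq_add_cos_sq φ
  simp only [Fin.sum_univ_two]
  rw [sph2_decomp, sph2'_decomp]
  simp only [map_add, _root_.map_smul, smul_eq_mul, sph2_apply, sph2'_apply]
  norm_num [Matrix.cons_val_zero, Matrix.cons_val_one]
  linear_combination (-1 : ℝ) * (L 0 (EuclideanSpace.single 0 1) + L 1 (EuclideanSpace.single 1 1)) * h

section Main
variable {R : ℝ} {a b d : ℝ → ℝ} {c : EuclideanSpace ℝ (Fin 2) → ℝ}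
  {w : EuclideanSpace ℝ (Fin 2) → ℝ} {U : Set (EuclideanSpace ℝ (Fin 2))}

/-- `F_j`, the flux components. -/
noncomputable def Ff (a b d : ℝ → ℝ) (c w : EuclideanSpace ℝ (Fin 2) → ℝ) (j : Fin 2)
    (y : EuclideanSpace ℝ (Fin 2)) : ℝ :=
  ∑ k, aCoef2 a b d c y j k * pd2 k w y

/-- The angular flux function. -/
noncomputable def gf (a b d : ℝ → ℝ) (c w : EuclideanSpace ℝ (Fin 2) → ℝ) (s ψ : ℝ) : ℝ :=
  ∑ j, Ff a b d c w j (s • sph2 ψ) * sph2' ψ j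

lemma contDiffOn_pdv (hU : IsOpen U) (hw : ContDiffOn ℝ 2 w U) (v : EuclideanSpace ℝ (Fin 2)) :
    ContDiffOn ℝ 1 (fun y => fderiv ℝ w y v) U := by
  have h1 : ContDiffOn ℝ 1 (fderiv ℝ w) U := hw.fderiv_of_isOpen hU (by norm_num)
  exact (ContinuousLinearMap.apply ℝ ℝ v).contDiff.comp_contDiffOn h1

lemma mem_V (hR : 0 < R) {s ψ : ℝ} (hs : s ∈ Set.Ioo 0 R) :
    s • sph2 ψ ∈ Metric.ball (0 : EuclideanSpace ℝ (Fin 2)) R \ {0} := by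
  have hn : ‖s • sph2 ψ‖ = s := smul_sph2_norm s ψ hs.1.le
  constructor
  · rw [mem_ball_zero_iff, hn]; exact hs.2
  · simp only [Set.mem_singleton_iff]
    intro h
    rw [h, norm_zero] at hn
    exact absurd hn.symm (ne_of_gt hs.1)

lemma isOpen_V (hU : IsOpen U) :
    IsOpen ((Metric.ball (0 : EuclideanSpace ℝ (Fin 2)) R \ {0}) ∩ U) :=
  ((Metric.isOpen_ball).sdiff isClosed_singleton).inter hU

lemma pointwise_polar (hR : 0 < R) (hU : IsOpen U)
    (hUs : Metric.closedBall (0 : EuclideanSpace ℝ (Fin 2)) R ⊆ U)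
    (hw : ContDiffOn ℝ 2 w U)
    (ha : ContDiffOn ℝ 1 a (Set.Icc 0 R)) (hb : ContDiffOn ℝ 1 b (Set.Icc 0 R))
    (hd : ContDiffOn ℝ 1 d (Set.Icc 0 R))
    (hc : ContDiffOn ℝ 1 c (Metric.closedBall 0 R))
    (s ψ : ℝ) (hs : s ∈ Set.Ioo 0 R) :
    Aop2 a b d c w (s • sph2 ψ)
      = (a s - d s) * fderiv ℝ (fun y => fderiv ℝ w y (sph2 ψ)) (s • sph2 ψ) (sph2 ψ)
        + (deriv a s - deriv d s) * fderiv ℝ w (s • sph2 ψ) (sph2 ψ)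
        + ((a s - d s) / s) * fderiv ℝ w (s • sph2 ψ) (sph2 ψ)
        + (1/s) * deriv (gf a b d c w s) ψ := by
  have hVo := isOpen_V (R := R) hU
  have hxV : s • sph2 ψ ∈ (Metric.ball (0:EuclideanSpace ℝ (Fin 2)) R \ {0}) ∩ U :=
    ⟨mem_V hR hs, hUs (Metric.ball_subset_closedBall (mem_V hR hs).1)⟩
  set x := s • sph2 ψ with hxdef
  have hxU : x ∈ U := hxV.2
  have hGd : ∀ j k, DifferentiableAt ℝ (fun y => aCoef2 a b d c y j k * pd2 k w y) x := by
    intro j k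
    have := ((contDiffOn_aCoef2 hR ha hb hd hc j k).mono Set.inter_subset_left).mul
      ((contDiffOn_pd2 hU hw k).mono Set.inter_subset_right)
    exact (this.differentiableOn one_ne_zero).differentiableAt (hVo.mem_nhds hxV)
  have hFd : ∀ j, DifferentiableAt ℝ (Ff a b d c w j) x := by
    intro j
    have := contDiffOn_F hR hU hw ha hb hd hc (j := j)
    exact (this.differentiableOn one_ne_zero).differentiableAt (hVo.mem_nhds hxV)
  -- Step 1 : Aop2 as divergence of Ff
  have step1 : Aop2 a b d c w x
      = ∑ j, fderiv ℝ (Ff a b d c w j) x (EuclideanSpace.single j (1:ℝ)) := by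
    simp only [Aop2, pd2]
    refine Finset.sum_congr rfl fun j _ => ?_
    have := fderiv_fun_sum (u := Finset.univ)
      (A := fun k (y : EuclideanSpace ℝ (Fin 2)) => aCoef2 a b d c y j k * pd2 k w y)
      (fun k _ => hGd j k)
    rw [show Ff a b d c w j = fun y => ∑ k, aCoef2 a b d c y j k * pd2 k w y from rfl]
    rw [this, ContinuousLinearMap.sum_apply]
    simp only [pd2]
  -- Step 2 : frame decomposition
  have step2 : Aop2 a b d c w x
      = ∑ j, (fderiv ℝ (Ff a b d c w j) x (sph2 ψ) * sph2 ψ j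
          + fderiv ℝ (Ff a b d c w j) x (sph2' ψ) * sph2' ψ j) := by
    rw [step1]; exact frame2 _ ψ
  have hs0 : s ≠ 0 := ne_of_gt hs.1
  -- radial identity
  have heq : ∀ t ∈ Set.Ioo (0:ℝ) R, (∑ j, Ff a b d c w j (t • sph2 ψ) * sph2 ψ j)
      = (a t - d t) * fderiv ℝ w (t • sph2 ψ) (sph2 ψ) := by
    intro t ht
    have ht0 : t ≠ 0 := ne_of_gt ht.1
    have hy0 : t • sph2 ψ ≠ 0 := (mem_V hR ht).2
    have key := aCoef2_radial (a := a) (b := b) (d := d) (c := c) (t • sph2 ψ) hy0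
      (fun k => pd2 k w (t • sph2 ψ))
    rw [smul_sph2_norm t ψ ht.1.le] at key
    rw [clm_sph2]
    simp only [Fin.sum_univ_two, PiLp.smul_apply, smul_eq_mul, Ff, pd2] at key ⊢
    refine mul_left_cancel₀ ht0 ?_
    linear_combination key
  -- derivative of the radial part, computed two ways
  have hqD : DifferentiableAt ℝ (fun y => fderiv ℝ w y (sph2 ψ)) x :=
    ((contDiffOn_pdv hU hw (sph2 ψ)).differentiableOn one_ne_zero).differentiableAt
      (hU.mem_nhds hxU)
  have hq1 : HasDerivAt (fun t => fderiv ℝ w (t • sph2 ψ) (sph2 ψ))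
      (fderiv ℝ (fun y => fderiv ℝ w y (sph2 ψ)) x (sph2 ψ)) s :=
    hasDerivAt_comp_smul_left hqD
  have haD : HasDerivAt a (deriv a s) s :=
    ((ha.contDiffAt (Icc_mem_nhds hs.1 hs.2)).differentiableAt one_ne_zero).hasDerivAt
  have hdD : HasDerivAt d (deriv d s) s :=
    ((hd.contDiffAt (Icc_mem_nhds hs.1 hs.2)).differentiableAt one_ne_zero).hasDerivAt
  have hp2 : HasDerivAt (fun t => (a t - d t) * fderiv ℝ w (t • sph2 ψ) (sph2 ψ))
      ((deriv a s - deriv d s) * fderiv ℝ w x (sph2 ψ)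
        + (a s - d s) * fderiv ℝ (fun y => fderiv ℝ w y (sph2 ψ)) x (sph2 ψ)) s :=
    (haD.sub hdD).mul hq1
  have hp3 : (fun t => ∑ j, Ff a b d c w j (t • sph2 ψ) * sph2 ψ j)
      =ᶠ[nhds s] (fun t => (a t - d t) * fderiv ℝ w (t • sph2 ψ) (sph2 ψ)) :=
    Filter.eventuallyEq_of_mem (isOpen_Ioo.mem_nhds hs) heq
  have hp4 : HasDerivAt (fun t => ∑ j, Ff a b d c w j (t • sph2 ψ) * sph2 ψ j)
      ((deriv a s - deriv d s) * fderiv ℝ w x (sph2 ψ)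
        + (a s - d s) * fderiv ℝ (fun y => fderiv ℝ w y (sph2 ψ)) x (sph2 ψ)) s :=
    hp2.congr_of_eventuallyEq hp3
  have hp1 : HasDerivAt (fun t => ∑ j, Ff a b d c w j (t • sph2 ψ) * sph2 ψ j)
      (∑ j, fderiv ℝ (Ff a b d c w j) x (sph2 ψ) * sph2 ψ j) s :=
    HasDerivAt.fun_sum fun j _ => (hasDerivAt_comp_smul_left (hFd j)).mul_const (sph2 ψ j)
  have key3 : ∑ j, fderiv ℝ (Ff a b d c w j) x (sph2 ψ) * sph2 ψ j
      = (deriv a s - deriv d s) * fderiv ℝ w x (sph2 ψ)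
        + (a s - d s) * fderiv ℝ (fun y => fderiv ℝ w y (sph2 ψ)) x (sph2 ψ) :=
    hp1.unique hp4
  -- angular part
  have hDj : ∀ j : Fin 2, HasDerivAt (fun ψ' => sph2' ψ' j) (-(sph2 ψ j)) ψ := by
    intro j
    have := (EuclideanSpace.proj j :
      EuclideanSpace ℝ (Fin 2) →L[ℝ] ℝ).hasFDerivAt.comp_hasDerivAt ψ (hasDerivAt_sph2' ψ)
    exact this
  have hg : HasDerivAt (gf a b d c w s)
      (∑ j, (fderiv ℝ (Ff a b d c w j) x (s • sph2' ψ) * sph2' ψ j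
        + Ff a b d c w j x * -(sph2 ψ j))) ψ :=
    HasDerivAt.fun_sum fun j _ => (hasDerivAt_comp_smul_right (hFd j)).mul (hDj j)
  have hgd := hg.deriv
  have hps : ∑ j, Ff a b d c w j x * sph2 ψ j
      = (a s - d s) * fderiv ℝ w x (sph2 ψ) := heq s hs
  rw [step2]
  simp only [Fin.sum_univ_two, _root_.map_smul, smul_eq_mul] at key3 hgd hps ⊢
  have hgd2 : deriv (gf a b d c w s) ψ
      = s * (fderiv ℝ (Ff a b d c w 0) x (sph2' ψ) * sph2' ψ 0
          + fderiv ℝ (Ff a b d c w 1) x (sph2' ψ) * sph2' ψ 1)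
        - (a s - d s) * fderiv ℝ w x (sph2 ψ) := by
    rw [hgd]; linear_combination -hps
  rw [hgd2]
  field_simp
  linear_combination s * key3

lemma ball_subset_Ioo {R s ε : ℝ} (hs : s ∈ Set.Ioo 0 R)
    (hε : ε = min (s/2) ((R - s)/2)) : Metric.ball s ε ⊆ Set.Ioo 0 R := by
  intro x hx
  rw [Metric.mem_ball, Real.dist_eq, abs_lt] at hx
  constructor
  · nlinarith [hx.1, min_le_left (s/2) ((R-s)/2), hs.1]
  · nlinarith [hx.2, min_le_right (s/2) ((R-s)/2), hs.2]

lemma closedBall_subset_Ioo {R s ε : ℝ} (hs : s ∈ Set.Ioo 0 R)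
    (hε : ε = min (s/2) ((R - s)/2)) : Metric.closedBall s ε ⊆ Set.Ioo 0 R := by
  intro x hx
  rw [Metric.mem_closedBall, Real.dist_eq, abs_le] at hx
  constructor
  · nlinarith [hx.1, min_le_left (s/2) ((R-s)/2), hs.1, hs.2]
  · nlinarith [hx.2, min_le_right (s/2) ((R-s)/2), hs.2]

/-- Generic differentiation under the interval integral, continuous setting. -/
lemma hasDerivAt_param {R : ℝ} {G G' : ℝ → ℝ → ℝ} {s : ℝ} (hs : s ∈ Set.Ioo 0 R)
    (hG : ∀ t ∈ Set.Ioo (0:ℝ) R, Continuous (G t))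
    (hG' : ContinuousOn (fun p : ℝ × ℝ => G' p.1 p.2) (Set.Ioo 0 R ×ˢ Set.univ))
    (hderiv : ∀ ψ : ℝ, ∀ t ∈ Set.Ioo (0:ℝ) R, HasDerivAt (fun t' => G t' ψ) (G' t ψ) t) :
    HasDerivAt (fun t => ∫ ψ in (0:ℝ)..(2*Real.pi), G t ψ)
      (∫ ψ in (0:ℝ)..(2*Real.pi), G' s ψ) s := by
  set ε := min (s/2) ((R - s)/2) with hε
  have hε0 : 0 < ε := by
    apply lt_min <;> [linarith [hs.1]; linarith [hs.2]]
  have hball : Metric.ball s ε ⊆ Set.Ioo 0 R := ball_subset_Ioo hs hε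
  have hcball : Metric.closedBall s ε ⊆ Set.Ioo 0 R := closedBall_subset_Ioo hs hε
  have hK : IsCompact (Metric.closedBall s ε ×ˢ Set.uIcc (0:ℝ) (2*Real.pi)) :=
    (isCompact_closedBall s ε).prod isCompact_uIcc
  have hsubK : Metric.closedBall s ε ×ˢ Set.uIcc (0:ℝ) (2*Real.pi)
      ⊆ Set.Ioo 0 R ×ˢ Set.univ := by
    intro p hp; exact ⟨hcball hp.1, Set.mem_univ _⟩
  obtain ⟨M, hM⟩ := hK.exists_bound_of_continuousOn (hG'.mono hsubK)
  have key := intervalIntegral.hasDerivAt_integral_of_dominated_loc_of_deriv_le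
    (F := G) (F' := G') (x₀ := s) (a := 0) (b := 2*Real.pi)
    (bound := fun _ => M) (μ := MeasureTheory.volume) (Metric.ball_mem_nhds s hε0)
    ?_ ?_ ?_ ?_ ?_ ?_
  · exact key.2
  · filter_upwards [Metric.ball_mem_nhds s hε0] with t ht
    exact ((hG t (hball ht)).aestronglyMeasurable).restrict
  · exact (hG s hs).intervalIntegrable _ _
  · have : Continuous (G' s) := by
      rw [← continuousOn_univ]
      have : ContinuousOn (fun ψ : ℝ => (fun p : ℝ × ℝ => G' p.1 p.2) (s, ψ)) Set.univ := by
        apply hG'.comp (Continuous.continuousOn (by fun_prop))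
        intro ψ _; exact ⟨hs, Set.mem_univ _⟩
      exact this
    exact this.aestronglyMeasurable.restrict
  · apply MeasureTheory.ae_of_all
    intro ψ hψ t ht
    have hψ' : ψ ∈ Set.uIcc (0:ℝ) (2*Real.pi) := by
      rw [Set.uIoc_of_le (by positivity)] at hψ
      rw [Set.uIcc_of_le (by positivity)]
      exact Set.Ioc_subset_Icc_self hψ
    exact hM (t, ψ) ⟨Metric.ball_subset_closedBall ht, hψ'⟩
  · exact intervalIntegrable_const
  · apply MeasureTheory.ae_of_all
    intro ψ _ t ht
    exact hderiv ψ t (hball ht)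

end Main

attribute [fun_prop] continuous_sph2 continuous_sph2'

section Main
variable {R : ℝ} {a b d : ℝ → ℝ} {c : EuclideanSpace ℝ (Fin 2) → ℝ}
  {w : EuclideanSpace ℝ (Fin 2) → ℝ} {U : Set (EuclideanSpace ℝ (Fin 2))}

lemma continuous_gamma : Continuous (fun p : ℝ × ℝ => p.1 • sph2 p.2) :=
  continuous_fst.smul (continuous_sph2.comp continuous_snd)

lemma mapsTo_gamma (hR : 0 < R) (hUs : Metric.closedBall (0 : EuclideanSpace ℝ (Fin 2)) R ⊆ U) :
    ∀ p : ℝ × ℝ, p ∈ Set.Ioo (0:ℝ) R ×ˢ (Set.univ : Set ℝ) → p.1 • sph2 p.2 ∈ U :=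
  fun p hp => hUs (Metric.ball_subset_closedBall (mem_V hR hp.1).1)

lemma fderiv_pdv_eq (hU : IsOpen U) (hw : ContDiffOn ℝ 2 w U)
    {x : EuclideanSpace ℝ (Fin 2)} (hx : x ∈ U) (v u : EuclideanSpace ℝ (Fin 2)) :
    fderiv ℝ (fun y => fderiv ℝ w y v) x u = fderiv ℝ (fderiv ℝ w) x u v := by
  have hD : DifferentiableAt ℝ (fderiv ℝ w) x :=
    (((hw.fderiv_of_isOpen (m := 1) hU (by norm_num)).differentiableOn one_ne_zero).differentiableAt
      (hU.mem_nhds hx))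
  have h2 := ((ContinuousLinearMap.apply ℝ ℝ v).hasFDerivAt.comp x hD.hasFDerivAt).fderiv
  have hfe : (fun y => fderiv ℝ w y v)
      = ⇑((ContinuousLinearMap.apply ℝ ℝ) v) ∘ fderiv ℝ w := rfl
  rw [hfe, h2]
  rfl

lemma H1 (hR : 0 < R) (hU : IsOpen U)
    (hUs : Metric.closedBall (0 : EuclideanSpace ℝ (Fin 2)) R ⊆ U)
    (hw : ContDiffOn ℝ 2 w U) {s : ℝ} (hs : s ∈ Set.Ioo 0 R) :
    HasDerivAt (Phi2 w)
      (∫ ψ in (0:ℝ)..(2*Real.pi), fderiv ℝ w (s • sph2 ψ) (sph2 ψ)) s := by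
  have h := hasDerivAt_param (R := R) (G := fun t ψ => w (t • sph2 ψ))
    (G' := fun t ψ => fderiv ℝ w (t • sph2 ψ) (sph2 ψ)) hs ?_ ?_ ?_
  · exact h
  · intro t ht
    rw [← continuousOn_univ]
    refine (hw.continuousOn).comp (by fun_prop) ?_
    intro ψ _
    exact mapsTo_gamma hR hUs (t, ψ) ⟨ht, trivial⟩
  · refine ContinuousOn.clm_apply ?_ (by fun_prop)
    have h1 : ContDiffOn ℝ 1 (fderiv ℝ w) U := hw.fderiv_of_isOpen hU (by norm_num)
    exact (h1.continuousOn).comp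
      continuous_gamma.continuousOn (mapsTo_gamma hR hUs)
  · intro ψ t ht
    have hxU : t • sph2 ψ ∈ U := mapsTo_gamma hR hUs (t, ψ) ⟨ht, trivial⟩
    have hwD : DifferentiableAt ℝ w (t • sph2 ψ) :=
      ((hw.differentiableOn (by norm_num)).differentiableAt (hU.mem_nhds hxU))
    exact hasDerivAt_comp_smul_left hwD

lemma H2 (hR : 0 < R) (hU : IsOpen U)
    (hUs : Metric.closedBall (0 : EuclideanSpace ℝ (Fin 2)) R ⊆ U)
    (hw : ContDiffOn ℝ 2 w U) {s : ℝ} (hs : s ∈ Set.Ioo 0 R) :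
    HasDerivAt (fun t => ∫ ψ in (0:ℝ)..(2*Real.pi), fderiv ℝ w (t • sph2 ψ) (sph2 ψ))
      (∫ ψ in (0:ℝ)..(2*Real.pi),
        fderiv ℝ (fderiv ℝ w) (s • sph2 ψ) (sph2 ψ) (sph2 ψ)) s := by
  have h := hasDerivAt_param (R := R) (G := fun t ψ => fderiv ℝ w (t • sph2 ψ) (sph2 ψ))
    (G' := fun t ψ => fderiv ℝ (fderiv ℝ w) (t • sph2 ψ) (sph2 ψ) (sph2 ψ)) hs ?_ ?_ ?_
  · exact h
  · intro t ht
    rw [← continuousOn_univ]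
    refine ContinuousOn.clm_apply ?_ (by fun_prop)
    have h1 : ContDiffOn ℝ 1 (fderiv ℝ w) U := hw.fderiv_of_isOpen hU (by norm_num)
    refine (h1.continuousOn).comp (by fun_prop) ?_
    intro ψ _
    exact mapsTo_gamma hR hUs (t, ψ) ⟨ht, trivial⟩
  · refine ContinuousOn.clm_apply (ContinuousOn.clm_apply ?_ (by fun_prop)) (by fun_prop)
    have h2 : ContDiffOn ℝ 1 (fderiv ℝ w) U := hw.fderiv_of_isOpen hU (by norm_num)
    exact (h2.continuousOn_fderiv_of_isOpen hU le_rfl).comp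
      continuous_gamma.continuousOn (mapsTo_gamma hR hUs)
  · intro ψ t ht
    have hxU : t • sph2 ψ ∈ U := mapsTo_gamma hR hUs (t, ψ) ⟨ht, trivial⟩
    have hqD : DifferentiableAt ℝ (fun y => fderiv ℝ w y (sph2 ψ)) (t • sph2 ψ) :=
      ((contDiffOn_pdv hU hw (sph2 ψ)).differentiableOn one_ne_zero).differentiableAt
        (hU.mem_nhds hxU)
    have := hasDerivAt_comp_smul_left hqD
    rwa [fderiv_pdv_eq hU hw hxU (sph2 ψ) (sph2 ψ)] at this

lemma sph2_two_pi : sph2 (2*Real.pi) = sph2 0 := by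
  unfold sph2; norm_num

lemma sph2'_two_pi : sph2' (2*Real.pi) = sph2' 0 := by
  unfold sph2'; norm_num

lemma mapsTo_circle (hR : 0 < R) (hUs : Metric.closedBall (0 : EuclideanSpace ℝ (Fin 2)) R ⊆ U)
    {s : ℝ} (hs : s ∈ Set.Ioo 0 R) (ψ : ℝ) :
    s • sph2 ψ ∈ (Metric.ball (0 : EuclideanSpace ℝ (Fin 2)) R \ {0}) ∩ U :=
  ⟨mem_V hR hs, hUs (Metric.ball_subset_closedBall (mem_V hR hs).1)⟩

lemma hasDerivAt_gf (hR : 0 < R) (hU : IsOpen U)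
    (hUs : Metric.closedBall (0 : EuclideanSpace ℝ (Fin 2)) R ⊆ U)
    (hw : ContDiffOn ℝ 2 w U)
    (ha : ContDiffOn ℝ 1 a (Set.Icc 0 R)) (hb : ContDiffOn ℝ 1 b (Set.Icc 0 R))
    (hd : ContDiffOn ℝ 1 d (Set.Icc 0 R))
    (hc : ContDiffOn ℝ 1 c (Metric.closedBall 0 R))
    {s : ℝ} (hs : s ∈ Set.Ioo 0 R) (ψ : ℝ) :
    HasDerivAt (gf a b d c w s)
      (∑ j, (fderiv ℝ (Ff a b d c w j) (s • sph2 ψ) (s • sph2' ψ) * sph2' ψ j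
        + Ff a b d c w j (s • sph2 ψ) * -(sph2 ψ j))) ψ := by
  have hVo := isOpen_V (R := R) hU
  have hxV := mapsTo_circle hR hUs hs ψ
  have hFd : ∀ j, DifferentiableAt ℝ (Ff a b d c w j) (s • sph2 ψ) := by
    intro j
    exact (((contDiffOn_F hR hU hw ha hb hd hc (j := j)).differentiableOn
      one_ne_zero).differentiableAt (hVo.mem_nhds hxV))
  have hDj : ∀ j : Fin 2, HasDerivAt (fun ψ' => sph2' ψ' j) (-(sph2 ψ j)) ψ := by
    intro j
    have := (EuclideanSpace.proj j :
      EuclideanSpace ℝ (Fin 2) →L[ℝ] ℝ).hasFDerivAt.comp_hasDerivAt ψ (hasDerivAt_sph2' ψ)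
    exact this
  exact HasDerivAt.fun_sum fun j _ => (hasDerivAt_comp_smul_right (hFd j)).mul (hDj j)

lemma continuous_gderiv (hR : 0 < R) (hU : IsOpen U)
    (hUs : Metric.closedBall (0 : EuclideanSpace ℝ (Fin 2)) R ⊆ U)
    (hw : ContDiffOn ℝ 2 w U)
    (ha : ContDiffOn ℝ 1 a (Set.Icc 0 R)) (hb : ContDiffOn ℝ 1 b (Set.Icc 0 R))
    (hd : ContDiffOn ℝ 1 d (Set.Icc 0 R))
    (hc : ContDiffOn ℝ 1 c (Metric.closedBall 0 R))
    {s : ℝ} (hs : s ∈ Set.Ioo 0 R) :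
    Continuous (fun ψ => ∑ j, (fderiv ℝ (Ff a b d c w j) (s • sph2 ψ) (s • sph2' ψ) * sph2' ψ j
        + Ff a b d c w j (s • sph2 ψ) * -(sph2 ψ j))) := by
  have hVo := isOpen_V (R := R) hU
  have hmaps : ∀ ψ : ℝ, ψ ∈ (Set.univ : Set ℝ) →
      s • sph2 ψ ∈ (Metric.ball (0 : EuclideanSpace ℝ (Fin 2)) R \ {0}) ∩ U :=
    fun ψ _ => mapsTo_circle hR hUs hs ψ
  have hγ : Continuous (fun ψ : ℝ => s • sph2 ψ) := by fun_prop
  apply continuous_finset_sum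
  intro j _
  have hcF : ContinuousOn (Ff a b d c w j)
      ((Metric.ball (0 : EuclideanSpace ℝ (Fin 2)) R \ {0}) ∩ U) :=
    (contDiffOn_F hR hU hw ha hb hd hc (j := j)).continuousOn
  have hcdF : ContinuousOn (fderiv ℝ (Ff a b d c w j))
      ((Metric.ball (0 : EuclideanSpace ℝ (Fin 2)) R \ {0}) ∩ U) := by
    have := (contDiffOn_F hR hU hw ha hb hd hc (j := j)).continuousOn_fderiv_of_isOpen hVo le_rfl
    exact this
  have h1 : Continuous (fun ψ => fderiv ℝ (Ff a b d c w j) (s • sph2 ψ) (s • sph2' ψ)) := by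
    rw [← continuousOn_univ]
    exact (hcdF.comp hγ.continuousOn hmaps).clm_apply
      (by fun_prop : Continuous (fun ψ : ℝ => s • sph2' ψ)).continuousOn
  have h2 : Continuous (fun ψ => Ff a b d c w j (s • sph2 ψ)) := by
    rw [← continuousOn_univ]
    exact hcF.comp hγ.continuousOn hmaps
  have h3 : Continuous (fun ψ => sph2' ψ j) :=
    (EuclideanSpace.proj j : EuclideanSpace ℝ (Fin 2) →L[ℝ] ℝ).continuous.comp continuous_sph2'
  have h4 : Continuous (fun ψ => sph2 ψ j) :=
    (EuclideanSpace.proj j : EuclideanSpace ℝ (Fin 2) →L[ℝ] ℝ).continuous.comp continuous_sph2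
  exact (h1.mul h3).add (h2.mul h4.neg)

lemma integral_deriv_gf_zero (hR : 0 < R) (hU : IsOpen U)
    (hUs : Metric.closedBall (0 : EuclideanSpace ℝ (Fin 2)) R ⊆ U)
    (hw : ContDiffOn ℝ 2 w U)
    (ha : ContDiffOn ℝ 1 a (Set.Icc 0 R)) (hb : ContDiffOn ℝ 1 b (Set.Icc 0 R))
    (hd : ContDiffOn ℝ 1 d (Set.Icc 0 R))
    (hc : ContDiffOn ℝ 1 c (Metric.closedBall 0 R))
    {s : ℝ} (hs : s ∈ Set.Ioo 0 R) :
    ∫ ψ in (0:ℝ)..(2*Real.pi), deriv (gf a b d c w s) ψ = 0 := by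
  have hdAll := hasDerivAt_gf hR hU hUs hw ha hb hd hc hs
  have hder : deriv (gf a b d c w s) = fun ψ =>
      ∑ j, (fderiv ℝ (Ff a b d c w j) (s • sph2 ψ) (s • sph2' ψ) * sph2' ψ j
        + Ff a b d c w j (s • sph2 ψ) * -(sph2 ψ j)) :=
    funext fun ψ => (hdAll ψ).deriv
  have hint : IntervalIntegrable (deriv (gf a b d c w s)) MeasureTheory.volume 0 (2*Real.pi) := by
    rw [hder]
    exact (continuous_gderiv hR hU hUs hw ha hb hd hc hs).intervalIntegrable _ _
  rw [intervalIntegral.integral_deriv_eq_sub (fun ψ _ => (hdAll ψ).differentiableAt) hint]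
  have : gf a b d c w s (2*Real.pi) = gf a b d c w s 0 := by
    unfold gf
    rw [sph2_two_pi, sph2'_two_pi]
  rw [this, sub_self]

lemma cont_f2 (hR : 0 < R) (hU : IsOpen U)
    (hUs : Metric.closedBall (0 : EuclideanSpace ℝ (Fin 2)) R ⊆ U)
    (hw : ContDiffOn ℝ 2 w U) {s : ℝ} (hs : s ∈ Set.Ioo 0 R) :
    Continuous (fun ψ => fderiv ℝ w (s • sph2 ψ) (sph2 ψ)) := by
  rw [← continuousOn_univ]
  have h1 : ContDiffOn ℝ 1 (fderiv ℝ w) U := hw.fderiv_of_isOpen hU (by norm_num)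
  refine ContinuousOn.clm_apply ?_ continuous_sph2.continuousOn
  exact (h1.continuousOn).comp (by fun_prop : Continuous (fun ψ : ℝ => s • sph2 ψ)).continuousOn
    (fun ψ _ => (mapsTo_circle hR hUs hs ψ).2)

lemma cont_f1 (hR : 0 < R) (hU : IsOpen U)
    (hUs : Metric.closedBall (0 : EuclideanSpace ℝ (Fin 2)) R ⊆ U)
    (hw : ContDiffOn ℝ 2 w U) {s : ℝ} (hs : s ∈ Set.Ioo 0 R) :
    Continuous (fun ψ => fderiv ℝ (fderiv ℝ w) (s • sph2 ψ) (sph2 ψ) (sph2 ψ)) := by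
  rw [← continuousOn_univ]
  have h1 : ContDiffOn ℝ 1 (fderiv ℝ w) U := hw.fderiv_of_isOpen hU (by norm_num)
  refine ContinuousOn.clm_apply (ContinuousOn.clm_apply ?_ continuous_sph2.continuousOn)
    continuous_sph2.continuousOn
  exact (h1.continuousOn_fderiv_of_isOpen hU le_rfl).comp
    (by fun_prop : Continuous (fun ψ : ℝ => s • sph2 ψ)).continuousOn
    (fun ψ _ => (mapsTo_circle hR hUs hs ψ).2)

end Main


theorem stmt16 (R : ℝ) (hR : 0 < R)
    (a b d : ℝ → ℝ) (c : EuclideanSpace ℝ (Fin 2) → ℝ)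
    (ha : ContDiffOn ℝ 1 a (Set.Icc 0 R)) (hb : ContDiffOn ℝ 1 b (Set.Icc 0 R))
    (hd : ContDiffOn ℝ 1 d (Set.Icc 0 R))
    (hc : ContDiffOn ℝ 1 c (Metric.closedBall 0 R))
    (w : EuclideanSpace ℝ (Fin 2) → ℝ)
    (hw : ∃ U, IsOpen U ∧ Metric.closedBall (0 : EuclideanSpace ℝ (Fin 2)) R ⊆ U ∧
        ContDiffOn ℝ 2 w U) :
    ∀ r ∈ Set.Ioo (0:ℝ) R,
      DifferentiableAt ℝ (Phi2 w) r ∧ DifferentiableAt ℝ (deriv (Phi2 w)) r ∧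
      Phi2 (Aop2 a b d c w) r
        = (a r - d r) * deriv (deriv (Phi2 w)) r
          + (derivWithin a (Set.Icc 0 R) r - derivWithin d (Set.Icc 0 R) r)
              * deriv (Phi2 w) r
          + ((a r - d r) / r) * deriv (Phi2 w) r := by
  obtain ⟨U, hU, hUs, hwU⟩ := hw
  intro r hr
  have hr0 : r ≠ 0 := ne_of_gt hr.1
  have hIcc : Set.Icc (0:ℝ) R ∈ nhds r :=
    Filter.mem_of_superset (isOpen_Ioo.mem_nhds hr) Set.Ioo_subset_Icc_self
  -- first derivative
  have hH1 : ∀ s ∈ Set.Ioo (0:ℝ) R, HasDerivAt (Phi2 w)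
      (∫ ψ in (0:ℝ)..(2*Real.pi), fderiv ℝ w (s • sph2 ψ) (sph2 ψ)) s :=
    fun s hs => H1 hR hU hUs hwU hs
  have hdiff1 : DifferentiableAt ℝ (Phi2 w) r := (hH1 r hr).differentiableAt
  have hderiv1 : deriv (Phi2 w) r
      = ∫ ψ in (0:ℝ)..(2*Real.pi), fderiv ℝ w (r • sph2 ψ) (sph2 ψ) := (hH1 r hr).deriv
  -- second derivative
  have hEv : deriv (Phi2 w) =ᶠ[nhds r]
      (fun t => ∫ ψ in (0:ℝ)..(2*Real.pi), fderiv ℝ w (t • sph2 ψ) (sph2 ψ)) :=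
    Filter.eventuallyEq_of_mem (isOpen_Ioo.mem_nhds hr) (fun s hs => (hH1 s hs).deriv)
  have hH2 := H2 hR hU hUs hwU hr
  have hdiff2 : DifferentiableAt ℝ (deriv (Phi2 w)) r :=
    (hEv.differentiableAt_iff).2 hH2.differentiableAt
  have hderiv2 : deriv (deriv (Phi2 w)) r
      = ∫ ψ in (0:ℝ)..(2*Real.pi),
          fderiv ℝ (fderiv ℝ w) (r • sph2 ψ) (sph2 ψ) (sph2 ψ) := by
    rw [hEv.deriv_eq, hH2.deriv]
  refine ⟨hdiff1, hdiff2, ?_⟩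
  -- pointwise identity on the circle of radius r
  have hpt : ∀ ψ : ℝ, Aop2 a b d c w (r • sph2 ψ)
      = (a r - d r) * fderiv ℝ (fderiv ℝ w) (r • sph2 ψ) (sph2 ψ) (sph2 ψ)
        + (deriv a r - deriv d r) * fderiv ℝ w (r • sph2 ψ) (sph2 ψ)
        + ((a r - d r) / r) * fderiv ℝ w (r • sph2 ψ) (sph2 ψ)
        + (1/r) * deriv (gf a b d c w r) ψ := by
    intro ψ
    have := pointwise_polar hR hU hUs hwU ha hb hd hc r ψ hr
    rwa [fderiv_pdv_eq hU hwU (mapsTo_circle hR hUs hr ψ).2 (sph2 ψ) (sph2 ψ)] at this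
  -- integrability of the pieces
  have hf1 : Continuous (fun ψ => fderiv ℝ (fderiv ℝ w) (r • sph2 ψ) (sph2 ψ) (sph2 ψ)) :=
    cont_f1 hR hU hUs hwU hr
  have hf2 : Continuous (fun ψ => fderiv ℝ w (r • sph2 ψ) (sph2 ψ)) :=
    cont_f2 hR hU hUs hwU hr
  have hdg := hasDerivAt_gf hR hU hUs hwU ha hb hd hc hr
  have hf4 : Continuous (fun ψ => deriv (gf a b d c w r) ψ) := by
    have hder : deriv (gf a b d c w r) = fun ψ =>
        ∑ j, (fderiv ℝ (Ff a b d c w j) (r • sph2 ψ) (r • sph2' ψ) * sph2' ψ j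
          + Ff a b d c w j (r • sph2 ψ) * -(sph2 ψ j)) :=
      funext fun ψ => (hdg ψ).deriv
    rw [hder]
    exact continuous_gderiv hR hU hUs hwU ha hb hd hc hr
  -- compute the integral
  have hPhiA : Phi2 (Aop2 a b d c w) r
      = ∫ ψ in (0:ℝ)..(2*Real.pi), Aop2 a b d c w (r • sph2 ψ) := rfl
  have hsplit : ∫ ψ in (0:ℝ)..(2*Real.pi), Aop2 a b d c w (r • sph2 ψ)
      = (∫ ψ in (0:ℝ)..(2*Real.pi),
          (a r - d r) * fderiv ℝ (fderiv ℝ w) (r • sph2 ψ) (sph2 ψ) (sph2 ψ)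
          + ((deriv a r - deriv d r) * fderiv ℝ w (r • sph2 ψ) (sph2 ψ)
          + (((a r - d r) / r) * fderiv ℝ w (r • sph2 ψ) (sph2 ψ)
          + (1/r) * deriv (gf a b d c w r) ψ))) := by
    apply intervalIntegral.integral_congr
    intro ψ _
    simp only [hpt]; ring
  have i1 : IntervalIntegrable (fun ψ =>
      (a r - d r) * fderiv ℝ (fderiv ℝ w) (r • sph2 ψ) (sph2 ψ) (sph2 ψ))
      MeasureTheory.volume 0 (2*Real.pi) := (continuous_const.mul hf1).intervalIntegrable _ _
  have i2 : IntervalIntegrable (fun ψ =>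
      (deriv a r - deriv d r) * fderiv ℝ w (r • sph2 ψ) (sph2 ψ))
      MeasureTheory.volume 0 (2*Real.pi) := (continuous_const.mul hf2).intervalIntegrable _ _
  have i3 : IntervalIntegrable (fun ψ =>
      ((a r - d r) / r) * fderiv ℝ w (r • sph2 ψ) (sph2 ψ))
      MeasureTheory.volume 0 (2*Real.pi) := (continuous_const.mul hf2).intervalIntegrable _ _
  have i4 : IntervalIntegrable (fun ψ => (1/r) * deriv (gf a b d c w r) ψ)
      MeasureTheory.volume 0 (2*Real.pi) := (continuous_const.mul hf4).intervalIntegrable _ _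
  rw [hPhiA, hsplit, intervalIntegral.integral_add i1 (i2.add (i3.add i4)),
    intervalIntegral.integral_add i2 (i3.add i4),
    intervalIntegral.integral_add i3 i4]
  rw [intervalIntegral.integral_const_mul, intervalIntegral.integral_const_mul,
    intervalIntegral.integral_const_mul, intervalIntegral.integral_const_mul]
  rw [integral_deriv_gf_zero hR hU hUs hwU ha hb hd hc hr]
  rw [hderiv1, hderiv2]
  rw [derivWithin_of_mem_nhds hIcc, derivWithin_of_mem_nhds hIcc]
  ring
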